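/- Let m ∈ ℕ and H ⊆ {R,S}, and suppose m ≠ 0 or H ≠ {R,S}. Then the m-generated free algebra Fr_m(RRA_H) is not atomic: there exists a relation-type term τ over m variables such that τ = 0 is not RRA_H-valid and no atom of Fr_m(RRA_H) lies below [τ]. -/

import Mathlib

/-- Relation-type terms over `m` variables. -/
inductive RTerm (m : ℕ) : Type
  | var : Fin m → RTerm m
  | zero : RTerm m
  | one : RTerm m
  | id : RTerm m
  | add : RTerm m → RTerm m → RTerm m
  | mul : RTerm m → RTerm m → RTerm m
  | neg : RTerm m → RTerm m
  | comp : RTerm m → RTerm m → RTerm m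
  | conv : RTerm m → RTerm m
  deriving DecidableEq

/-- The diversity term `0′ = 1 · −1′`. -/
def RTerm.div {m : ℕ} : RTerm m := .mul .one (.neg .id)

/-- The list `D_m = {1′, x_0, …, x_{m−1}}`. -/
def listD (m : ℕ) : List (RTerm m) :=
  RTerm.id :: List.ofFn (fun i : Fin m => RTerm.var i)

/-- Signed product `Y^α`, where the sign of `x ∈ Y` is positive iff `x ∈ S`
(the empty product is `1`). -/
def sprodBy {m : ℕ} (Y S : List (RTerm m)) : RTerm m :=
  (Y.map (fun x => if x ∈ S then x else RTerm.neg x)).foldr RTerm.mul RTerm.one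

/-- The one-step closure `CY = {x;y : x,y ∈ Y} ∪ {x˘ : x ∈ Y}`. -/
def listC {m : ℕ} (Y : List (RTerm m)) : List (RTerm m) :=
  (Y.flatMap fun x => Y.map fun y => RTerm.comp x y) ++ Y.map RTerm.conv

/-- The normal forms `F_n^m`: `F_0^m = {D_m^β}`,
`F_{n+1}^m = {D_m^β · (C F_n^m)^α}`. -/
def forms (m : ℕ) : ℕ → List (RTerm m)
  | 0 => (listD m).sublists.map (sprodBy (listD m))
  | n + 1 =>
      (listD m).sublists.flatMap fun S =>
        (listC (forms m n)).sublists.map fun T =>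
          RTerm.mul (sprodBy (listD m) S) (sprodBy (listC (forms m n)) T)

/-- A Boolean algebra with operators of relation type: a Boolean algebra with a
distinguished identity element, a binary composition and a unary converse that
are normal and additive in each argument. -/
structure RelBAO (B : Type*) [BooleanAlgebra B] where
  rid : B
  comp : B → B → B
  conv : B → B
  comp_bot_left : ∀ x, comp ⊥ x = ⊥
  comp_bot_right : ∀ x, comp x ⊥ = ⊥
  comp_sup_left : ∀ x y z, comp (x ⊔ y) z = comp x z ⊔ comp y z
  comp_sup_right : ∀ x y z, comp x (y ⊔ z) = comp x y ⊔ comp x z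
  conv_bot : conv ⊥ = ⊥
  conv_sup : ∀ x y, conv (x ⊔ y) = conv x ⊔ conv y

/-- Evaluation of a relation-type term in a Boolean algebra with operators. -/
def beval {B : Type*} [BooleanAlgebra B] (A : RelBAO B) {m : ℕ} (v : Fin m → B) :
    RTerm m → B
  | .var i => v i
  | .zero => ⊥
  | .one => ⊤
  | .id => A.rid
  | .add a b => beval A v a ⊔ beval A v b
  | .mul a b => beval A v a ⊓ beval A v b
  | .neg a => (beval A v a)ᶜ
  | .comp a b => A.comp (beval A v a) (beval A v b)
  | .conv a => A.conv (beval A v a)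

/-- Relativized interpretation of relation-type terms inside a unit `W ⊆ U × U`. -/
def rint {U : Type*} (W : Set (U × U)) {m : ℕ} (v : Fin m → Set (U × U)) :
    RTerm m → Set (U × U)
  | .var i => v i
  | .zero => ∅
  | .one => W
  | .id => {p | p ∈ W ∧ p.1 = p.2}
  | .add a b => rint W v a ∪ rint W v b
  | .mul a b => rint W v a ∩ rint W v b
  | .neg a => W \ rint W v a
  | .comp a b => {p | p ∈ W ∧ ∃ c, (p.1, c) ∈ rint W v a ∧ (c, p.2) ∈ rint W v b}
  | .conv a => {p | p ∈ W ∧ (p.2, p.1) ∈ rint W v a}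

/-- The two relation properties `R` (reflexive) and `S` (symmetric). -/
inductive RS | R | S
  deriving DecidableEq

/-- `W` is an `H`-relation: reflexive on its base if `R ∈ H`,
symmetric if `S ∈ H`. -/
def IsHRel (H : Set RS) {U : Type*} (W : Set (U × U)) : Prop :=
  (RS.R ∈ H → ∀ a b : U, (a, b) ∈ W → (a, a) ∈ W ∧ (b, b) ∈ W) ∧
  (RS.S ∈ H → ∀ a b : U, (a, b) ∈ W → (b, a) ∈ W)

/-- The equation `τ = σ` is `RRA_H`-valid. -/
def Valid (H : Set RS) {m : ℕ} (τ σ : RTerm m) : Prop :=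
  ∀ (U : Type) (W : Set (U × U)) (v : Fin m → Set (U × U)),
    IsHRel H W → (∀ i, v i ⊆ W) → rint W v τ = rint W v σ

/-- `[σ]` is an atom of the free algebra `Fr_m(RRA_H)`. -/
def IsAtomT (H : Set RS) {m : ℕ} (σ : RTerm m) : Prop :=
  ¬ Valid H σ .zero ∧
    ∀ ρ : RTerm m, Valid H (σ.mul ρ) .zero ∨ Valid H (σ.mul (.neg ρ)) .zero

/-- `e1 = 1′·−(0′;0′)`. -/
def termE1 {m : ℕ} : RTerm m := .mul .id (.neg (.comp .div .div))
/-- `e2 = 1′·(0′;0′)`. -/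
def termE2 {m : ℕ} : RTerm m := .mul .id (.comp .div .div)
/-- `m2 = 0′·−(0′;0′)`. -/
def termM2 {m : ℕ} : RTerm m := .mul .div (.neg (.comp .div .div))
/-- `m3 = 0′·(0′;0′)`. -/
def termM3 {m : ℕ} : RTerm m := .mul .div (.comp .div .div)
/-- `t = 0′·0′˘·((0′·0′˘);(0′·0′˘))`. -/
def termT {m : ℕ} : RTerm m :=
  .mul (.mul .div (.conv .div)) (.comp (.mul .div (.conv .div)) (.mul .div (.conv .div)))

namespace S13
open RTerm

variable {m : ℕ}

/-- composition/converse depth -/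
def cd : RTerm m → ℕ
  | .var _ => 0
  | .zero => 0
  | .one => 0
  | .id => 0
  | .add a b => max (cd a) (cd b)
  | .mul a b => max (cd a) (cd b)
  | .neg a => cd a
  | .comp a b => max (cd a) (cd b) + 1
  | .conv a => cd a + 1

section SemLemmas
variable {P : Type} {X : Set (P × P)} {vX : Fin m → Set (P × P)}

lemma rint_zero : rint X vX .zero = ∅ := rfl
lemma rint_one : rint X vX .one = X := rfl
lemma rint_var (i : Fin m) : rint X vX (.var i) = vX i := rfl
lemma rint_id : rint X vX .id = {p | p ∈ X ∧ p.1 = p.2} := rfl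
lemma rint_add (a b : RTerm m) : rint X vX (.add a b) = rint X vX a ∪ rint X vX b := rfl
lemma rint_mul (a b : RTerm m) : rint X vX (.mul a b) = rint X vX a ∩ rint X vX b := rfl
lemma rint_neg (a : RTerm m) : rint X vX (.neg a) = X \ rint X vX a := rfl
lemma rint_comp (a b : RTerm m) : rint X vX (.comp a b) =
    {p | p ∈ X ∧ ∃ c, (p.1, c) ∈ rint X vX a ∧ (c, p.2) ∈ rint X vX b} := rfl
lemma rint_conv (a : RTerm m) : rint X vX (.conv a) =
    {p | p ∈ X ∧ (p.2, p.1) ∈ rint X vX a} := rfl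

lemma mem_div {p : P × P} : p ∈ rint X vX .div ↔ p ∈ X ∧ p.1 ≠ p.2 := by
  simp only [RTerm.div, rint_mul, rint_neg, rint_one, rint_id, Set.mem_inter_iff,
    Set.mem_diff, Set.mem_setOf_eq]
  tauto

lemma rint_sub (hsub : ∀ i, vX i ⊆ X) : ∀ t : RTerm m, rint X vX t ⊆ X := by
  intro t
  induction t with
  | var i => exact hsub i
  | zero => exact Set.empty_subset _
  | one => exact subset_rfl
  | id => intro p hp; exact hp.1
  | add a b iha ihb => exact Set.union_subset iha ihb
  | mul a b iha ihb => exact Set.Subset.trans Set.inter_subset_left iha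
  | neg a iha => exact Set.diff_subset
  | comp a b iha ihb => intro p hp; exact hp.1
  | conv a iha => intro p hp; exact hp.1

end SemLemmas
/-- "diversity-alive": has a witness distinct (as a point) from both endpoints. -/
def ALp : RTerm m := .comp .div .div
/-- "right endpoint has a loop". -/
def RLt : RTerm m := .comp .one .id
/-- All one-step "move targets" from the current pair satisfy `t`. -/
def NBad (t : RTerm m) : RTerm m :=
  .mul (.neg (.comp (.mul .one (.neg t)) .one))
    (.mul (.neg (.comp .one (.mul .one (.neg t)))) (.neg (.conv (.mul .one (.neg t)))))
/-- Iterated "co-reachability": `b` holds everywhere within `s` moves. -/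
def CT (b : RTerm m) : ℕ → RTerm m
  | 0 => b
  | s + 1 => .mul b (NBad (CT b s))
/-- Reachability within `k` moves of a pair satisfying `V`. -/
def RT (V : RTerm m) : ℕ → RTerm m
  | 0 => V
  | k + 1 => .add (RT V k)
      (.add (.comp (RT V k) .one) (.add (.comp .one (RT V k)) (.conv (RT V k))))

section SemLemmas2
variable {P : Type} {X : Set (P × P)} {vX : Fin m → Set (P × P)}

lemma mem_ALp {p : P × P} : p ∈ rint X vX ALp ↔
    p ∈ X ∧ ∃ c, ((p.1, c) ∈ X ∧ p.1 ≠ c) ∧ ((c, p.2) ∈ X ∧ c ≠ p.2) := by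
  simp only [ALp, rint_comp, Set.mem_setOf_eq, mem_div]

lemma mem_RLt {p : P × P} : p ∈ rint X vX RLt ↔ p ∈ X ∧ (p.2, p.2) ∈ X := by
  simp only [RLt, rint_comp, rint_one, rint_id, Set.mem_setOf_eq]
  constructor
  · rintro ⟨hp, c, hc1, hc2, hce⟩
    subst hce; exact ⟨hp, hc2⟩
  · rintro ⟨hp, hl⟩
    exact ⟨hp, p.2, hp, hl, rfl⟩

lemma mem_NBad {t : RTerm m} {p : P × P} : p ∈ rint X vX (NBad t) ↔
    p ∈ X ∧
    (∀ c, (p.1, c) ∈ X → (c, p.2) ∈ X →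
      (p.1, c) ∈ rint X vX t ∧ (c, p.2) ∈ rint X vX t) ∧
    ((p.2, p.1) ∈ X → (p.2, p.1) ∈ rint X vX t) := by
  simp only [NBad, rint_mul, rint_neg, rint_comp, rint_conv, rint_one, rint_mul,
    Set.mem_inter_iff, Set.mem_diff, Set.mem_setOf_eq]
  constructor
  · rintro ⟨⟨hp1, hn1⟩, ⟨_, hn2⟩, ⟨_, hn3⟩⟩
    refine ⟨hp1, fun c h1 h2 => ⟨?_, ?_⟩, fun hs => ?_⟩
    · by_contra hc
      exact hn1 ⟨hp1, c, ⟨h1, h1, hc⟩, h2⟩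
    · by_contra hc
      exact hn2 ⟨hp1, c, h1, h2, h2, hc⟩
    · by_contra hc
      exact hn3 ⟨hp1, hs, hs, hc⟩
  · rintro ⟨hp, hall, hconv⟩
    refine ⟨⟨hp, ?_⟩, ⟨hp, ?_⟩, hp, ?_⟩
    · rintro ⟨_, c, ⟨h1, hn⟩, h2⟩
      exact hn.2 (hall c h1 h2).1
    · rintro ⟨_, c, h1, h2, hn⟩
      exact hn.2 (hall c h1 h2).2
    · rintro ⟨_, hs, hn⟩
      exact hn.2 (hconv hs)

lemma CT_base {b : RTerm m} : ∀ {s : ℕ} {p : P × P}, p ∈ rint X vX (CT b s) → p ∈ rint X vX b := by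
  intro s p
  cases s with
  | zero => exact _root_.id
  | succ s => intro h; exact h.1

lemma mem_CT_succ {b : RTerm m} {s : ℕ} {p : P × P} :
    p ∈ rint X vX (CT b (s + 1)) ↔ p ∈ rint X vX b ∧ p ∈ rint X vX (NBad (CT b s)) := by
  rfl

lemma RT_empty {V : RTerm m} (h : rint X vX V = ∅) : ∀ k, rint X vX (RT V k) = ∅ := by
  intro k
  induction k with
  | zero => exact h
  | succ k ih =>
    ext p
    simp only [RT, rint_add, rint_comp, rint_conv, rint_one, Set.mem_union,
      Set.mem_setOf_eq, ih, Set.mem_empty_iff_false]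
    tauto

lemma RT_step_m1 {V : RTerm m} {k : ℕ} {p : P × P} {c : P} (hp : p ∈ X)
    (h1 : (p.1, c) ∈ rint X vX (RT V k)) (h2 : (c, p.2) ∈ X) :
    p ∈ rint X vX (RT V (k + 1)) := by
  exact Or.inr (Or.inl ⟨hp, c, h1, h2⟩)

lemma RT_step_m2 {V : RTerm m} {k : ℕ} {p : P × P} {c : P} (hp : p ∈ X)
    (h1 : (p.1, c) ∈ X) (h2 : (c, p.2) ∈ rint X vX (RT V k)) :
    p ∈ rint X vX (RT V (k + 1)) := by
  exact Or.inr (Or.inr (Or.inl ⟨hp, c, h1, h2⟩))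

end SemLemmas2

section Grid
variable {U : Type} {W : Set (U × U)} {v : Fin m → Set (U × U)}

/-- Shape of grid pairs: grades adjacent, and copies of the same point
are related only at equal grades. -/
def Sh (p : (U × ℕ) × (U × ℕ)) : Prop :=
  p.1.2 ≤ p.2.2 + 1 ∧ p.2.2 ≤ p.1.2 + 1 ∧ (p.1.1 = p.2.1 → p.1.2 = p.2.2)

/-- The grid unit. -/
def GW (W : Set (U × U)) : Set ((U × ℕ) × (U × ℕ)) :=
  {p | Sh p ∧ (p.1.1, p.2.1) ∈ W}

/-- The grid valuation. -/
def Gv (W : Set (U × U)) (v : Fin m → Set (U × U)) (i : Fin m) :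
    Set ((U × ℕ) × (U × ℕ)) :=
  {p | p ∈ GW W ∧ (p.1.1, p.2.1) ∈ v i}

lemma Gv_sub (i : Fin m) : Gv W v i ⊆ GW W := fun _ h => h.1

lemma Sh_swap {p : (U × ℕ) × (U × ℕ)} (h : Sh p) : Sh (p.2, p.1) :=
  ⟨h.2.1, h.1, fun he => (h.2.2 he.symm).symm⟩

lemma Sh_loop (q : U × ℕ) : Sh (q, q) := ⟨Nat.le_succ _, Nat.le_succ _, fun _ => rfl⟩

/-- Transfer between the grid model and the base model. -/
theorem L1 (hv : ∀ i, v i ⊆ W) :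
    ∀ (t : RTerm m) (p : (U × ℕ) × (U × ℕ)), Sh p →
      (p ∈ rint (GW W) (Gv W v) t ↔ (p.1.1, p.2.1) ∈ rint W v t) := by
  intro t
  induction t with
  | var i =>
    intro p hp
    constructor
    · rintro ⟨_, h⟩; exact h
    · intro h; exact ⟨⟨hp, hv i h⟩, h⟩
  | zero => intro p hp; simp [rint_zero]
  | one =>
    intro p hp
    constructor
    · rintro ⟨_, h⟩; exact h
    · intro h; exact ⟨hp, h⟩
  | id =>
    intro p hp
    constructor
    · rintro ⟨⟨_, hw⟩, heq⟩
      exact ⟨hw, congrArg Prod.fst heq⟩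
    · rintro ⟨hw, heq⟩
      refine ⟨⟨hp, hw⟩, ?_⟩
      have h2 := hp.2.2 heq
      exact Prod.ext heq h2
  | add a b iha ihb =>
    intro p hp
    simp only [rint_add, Set.mem_union, iha p hp, ihb p hp]
  | mul a b iha ihb =>
    intro p hp
    simp only [rint_mul, Set.mem_inter_iff, iha p hp, ihb p hp]
  | neg a iha =>
    intro p hp
    constructor
    · rintro ⟨⟨_, hw⟩, hn⟩
      exact ⟨hw, fun hc => hn ((iha p hp).2 hc)⟩
    · rintro ⟨hw, hn⟩
      exact ⟨⟨hp, hw⟩, fun hc => hn ((iha p hp).1 hc)⟩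
  | comp a b iha ihb =>
    intro p hp
    obtain ⟨⟨u, i⟩, w, j⟩ := p
    constructor
    · rintro ⟨⟨_, hpw⟩, c, hca, hcb⟩
      have hca' := rint_sub Gv_sub a hca
      have hcb' := rint_sub Gv_sub b hcb
      exact ⟨hpw, c.1, (iha _ hca'.1).1 hca, (ihb _ hcb'.1).1 hcb⟩
    · rintro ⟨hpw, e, hea, heb⟩
      refine ⟨⟨hp, hpw⟩, ?_⟩
      by_cases h1 : e = u
      · subst h1
        refine ⟨(e, i), (iha ((e, i), (e, i)) (Sh_loop _)).2 hea,
          (ihb ((e, i), (w, j)) hp).2 heb⟩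
      by_cases h2 : e = w
      · subst h2
        refine ⟨(e, j), (iha ((u, i), (e, j)) hp).2 hea,
          (ihb ((e, j), (e, j)) (Sh_loop _)).2 heb⟩
      · have ha1 : i ≤ j + 1 := hp.1
        have ha2 : j ≤ i + 1 := hp.2.1
        refine ⟨(e, max i j), (iha ((u, i), (e, max i j)) ?_).2 hea,
          (ihb ((e, max i j), (w, j)) ?_).2 heb⟩
        · refine ⟨?_, ?_, fun hc => absurd hc.symm h1⟩
          · show i ≤ max i j + 1
            omega
          · show max i j ≤ i + 1
            omega
        · refine ⟨?_, ?_, fun hc => absurd hc h2⟩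
          · show max i j ≤ j + 1
            omega
          · show j ≤ max i j + 1
            omega
  | conv a iha =>
    intro p hp
    constructor
    · rintro ⟨⟨_, hw⟩, hs⟩
      exact ⟨hw, (iha _ (Sh_swap hp)).1 hs⟩
    · rintro ⟨hw, hs⟩
      exact ⟨⟨hp, hw⟩, (iha _ (Sh_swap hp)).2 hs⟩

end Grid

section Agree
variable {U : Type} {W : Set (U × U)} {v : Fin m → Set (U × U)}

/-- Agreement: a variant grid model agreeing with the pure grid at shallow
grades agrees on terms of bounded depth at shallow pairs. -/
theorem Cagree (D : ℕ) (X : Set ((U × ℕ) × (U × ℕ))) (vX : Fin m → Set ((U × ℕ) × (U × ℕ)))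
    (hXsh : ∀ p, p ∈ X → Sh p)
    (hXv : ∀ i, vX i ⊆ X)
    (hXW : ∀ p, max p.1.2 p.2.2 < D → (p ∈ X ↔ p ∈ GW W))
    (hXvv : ∀ i p, max p.1.2 p.2.2 < D → (p ∈ vX i ↔ p ∈ Gv W v i)) :
    ∀ (t : RTerm m) (p : (U × ℕ) × (U × ℕ)), max p.1.2 p.2.2 + cd t < D →
      (p ∈ rint X vX t ↔ p ∈ rint (GW W) (Gv W v) t) := by
  intro t
  induction t with
  | var i =>
    intro p hd
    exact hXvv i p (by have := hd; omega)
  | zero => intro p hd; simp [rint_zero]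
  | one =>
    intro p hd
    exact hXW p (by omega)
  | id =>
    intro p hd
    simp only [rint_id, Set.mem_setOf_eq]
    rw [hXW p (by omega)]
  | add a b iha ihb =>
    intro p hd
    have hda : max p.1.2 p.2.2 + cd a < D := by simp only [cd] at hd; omega
    have hdb : max p.1.2 p.2.2 + cd b < D := by simp only [cd] at hd; omega
    simp only [rint_add, Set.mem_union, iha p hda, ihb p hdb]
  | mul a b iha ihb =>
    intro p hd
    have hda : max p.1.2 p.2.2 + cd a < D := by simp only [cd] at hd; omega
    have hdb : max p.1.2 p.2.2 + cd b < D := by simp only [cd] at hd; omega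
    simp only [rint_mul, Set.mem_inter_iff, iha p hda, ihb p hdb]
  | neg a iha =>
    intro p hd
    have hda : max p.1.2 p.2.2 + cd a < D := by simp only [cd] at hd; omega
    simp only [rint_neg, Set.mem_diff]
    rw [hXW p (by omega), iha p hda]
  | comp a b iha ihb =>
    intro p hd
    have hda : cd a + 1 ≤ cd (RTerm.comp a b) := by simp only [cd]; omega
    have hdb : cd b + 1 ≤ cd (RTerm.comp a b) := by simp only [cd]; omega
    simp only [rint_comp, Set.mem_setOf_eq]
    rw [hXW p (by omega)]
    constructor
    · rintro ⟨hpw, c, hca, hcb⟩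
      refine ⟨hpw, c, ?_, ?_⟩
      · rw [← iha (p.1, c) ?_]
        · exact hca
        · have h1 := hXsh _ (rint_sub hXv a hca)
          have e1 : (p.1, c).2.2 ≤ (p.1, c).1.2 + 1 := h1.2.1
          simp only at e1 ⊢
          omega
      · rw [← ihb (c, p.2) ?_]
        · exact hcb
        · have h1 := hXsh _ (rint_sub hXv a hca)
          have e1 : (p.1, c).2.2 ≤ (p.1, c).1.2 + 1 := h1.2.1
          simp only at e1 ⊢
          omega
    · rintro ⟨hpw, c, hca, hcb⟩
      refine ⟨hpw, c, ?_, ?_⟩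
      · rw [iha (p.1, c) ?_]
        · exact hca
        · have h1 : Sh (p.1, c) := (rint_sub Gv_sub a hca).1
          have e1 : (p.1, c).2.2 ≤ (p.1, c).1.2 + 1 := h1.2.1
          simp only at e1 ⊢
          omega
      · rw [ihb (c, p.2) ?_]
        · exact hcb
        · have h1 : Sh (p.1, c) := (rint_sub Gv_sub a hca).1
          have e1 : (p.1, c).2.2 ≤ (p.1, c).1.2 + 1 := h1.2.1
          simp only at e1 ⊢
          omega
  | conv a iha =>
    intro p hd
    have hda : cd a + 1 ≤ cd (RTerm.conv a) := by simp only [cd]; omega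
    simp only [rint_conv, Set.mem_setOf_eq]
    rw [hXW p (by omega), iha (p.2, p.1) (by simp only; omega)]

end Agree

section Killer1
variable {U : Type} {W : Set (U × U)} {v : Fin m → Set (U × U)}

/-- Deep horizontal diversity pairs (removed in the killer model, case `R ∈ H`). -/
def Rem1 (D : ℕ) : Set ((U × ℕ) × (U × ℕ)) :=
  {p | p.1.2 = p.2.2 ∧ D ≤ p.1.2 ∧ p.1.1 ≠ p.2.1}

def WK (W : Set (U × U)) (D : ℕ) : Set ((U × ℕ) × (U × ℕ)) := GW W \ Rem1 D

def vK (W : Set (U × U)) (v : Fin m → Set (U × U)) (D : ℕ) (i : Fin m) :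
    Set ((U × ℕ) × (U × ℕ)) := Gv W v i ∩ WK W D

lemma vK_sub {D : ℕ} (i : Fin m) : vK W v D i ⊆ WK W D := fun _ h => h.2

lemma WK_Sh {D : ℕ} {p : (U × ℕ) × (U × ℕ)} (h : p ∈ WK W D) : Sh p := h.1.1

/-- From a diversity leg in a shaped set, the base points differ. -/
lemma ne_of_div {u e : U} {i k : ℕ} (hsh : Sh ((u, i), (e, k)))
    (hne : ((u, i) : U × ℕ) ≠ (e, k)) : u ≠ e := by
  intro hc
  subst hc
  have hik : i = k := hsh.2.2 rfl
  exact hne (by rw [hik])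

/-- Deep vertical pairs are diversity-dead in the killer model. -/
lemma K1 {D : ℕ} {u w : U} {i j : ℕ} (hD : D ≤ i) (hD2 : D ≤ j) (hij : i ≠ j) :
    ((u, i), (w, j)) ∉ rint (WK W D) (vK W v D) ALp := by
  intro h
  obtain ⟨hp, ⟨e, k⟩, ⟨h1, hne1⟩, ⟨h2, hne2⟩⟩ := mem_ALp.1 h
  have hs1 := WK_Sh h1
  have hs2 := WK_Sh h2
  have hue : u ≠ e := ne_of_div hs1 hne1
  have hew : e ≠ w := fun hc => (ne_of_div hs2 hne2) hc
  have w1 : i ≤ k + 1 := hs1.1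
  have w2 : k ≤ i + 1 := hs1.2.1
  have w3 : k ≤ j + 1 := hs2.1
  have w4 : j ≤ k + 1 := hs2.2.1
  have hpsh := WK_Sh hp
  have w5 : i ≤ j + 1 := hpsh.1
  have w6 : j ≤ i + 1 := hpsh.2.1
  have : k = i ∨ k = j := by omega
  rcases this with hk | hk
  · subst hk
    exact h1.2 ⟨rfl, hD, hue⟩
  · subst hk
    exact h2.2 ⟨rfl, hD2, hew⟩

/-- Extraction of a diversity witness with all its data, in the killer model. -/
lemma ALp_extract {D : ℕ} {u w : U} {i j : ℕ}
    (h : ((u, i), (w, j)) ∈ rint (WK W D) (vK W v D) ALp) :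
    ∃ e, e ≠ u ∧ e ≠ w ∧ (u, e) ∈ W ∧ (e, w) ∈ W := by
  obtain ⟨hp, ⟨e, k⟩, ⟨h1, hne1⟩, ⟨h2, hne2⟩⟩ := mem_ALp.1 h
  exact ⟨e, fun hc => ne_of_div (WK_Sh h1) hne1 hc.symm,
    fun hc => ne_of_div (WK_Sh h2) hne2 hc, h1.1.2, h2.1.2⟩

/-- Grid pairs over base edges belong to the killer model unless deep horizontal. -/
lemma edge_mem_WK {D : ℕ} {u e : U} {i k : ℕ} (hne : u ≠ e) (hW : (u, e) ∈ W)
    (hik : i ≤ k + 1) (hki : k ≤ i + 1) (hd : i = k → i < D) :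
    ((u, i), (e, k)) ∈ WK W D := by
  refine ⟨⟨⟨hik, hki, fun hc => absurd hc hne⟩, hW⟩, ?_⟩
  rintro ⟨heq, hDq, _⟩
  have h1 : i = k := heq
  have h2 : D ≤ i := hDq
  have := hd h1
  omega

/-- Loop pairs over base loops belong to the killer model. -/
lemma loop_mem_WK {D : ℕ} {u : U} {i : ℕ} (hW : (u, u) ∈ W) :
    ((u, i), (u, i)) ∈ WK W D := by
  refine ⟨⟨Sh_loop _, hW⟩, ?_⟩
  rintro ⟨_, _, hne'⟩
  exact hne' rfl

end Killer1

section Killer1b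
variable {U : Type} {W : Set (U × U)} {v : Fin m → Set (U × U)} {D : ℕ}

/-- A deep loop pair cannot satisfy `CT ALp s` for `s ≥ 1` in the killer model. -/
lemma loop_escape {s : ℕ} (hs : 1 ≤ s) {z : U} {g : ℕ} (hg : D ≤ g)
    (h : ((z, g), (z, g)) ∈ rint (WK W D) (vK W v D) (CT ALp s)) : False := by
  obtain ⟨s', rfl⟩ : ∃ s', s = s' + 1 := ⟨s - 1, by omega⟩
  obtain ⟨hb, hnb⟩ := mem_CT_succ.1 h
  obtain ⟨e, hez, -, hW1, hW2⟩ := ALp_extract hb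
  obtain ⟨-, hall, -⟩ := mem_NBad.1 hnb
  have l1 : ((z, g), (e, g + 1)) ∈ WK W D :=
    edge_mem_WK (Ne.symm hez) hW1 (by omega) (by omega) (by omega)
  have l2 : ((e, g + 1), (z, g)) ∈ WK W D :=
    edge_mem_WK hez hW2 (by omega) (by omega) (by omega)
  have hq := (hall (e, g + 1) l1 l2).1
  exact K1 hg (by omega) (by omega) (CT_base hq)

/-- The main killer bound, case `R ∈ H`. -/
lemma KL (hRW : ∀ a b : U, (a, b) ∈ W → (a, a) ∈ W ∧ (b, b) ∈ W) :
    ∀ s u i w j, ((u, i), (w, j)) ∈ rint (WK W D) (vK W v D) (CT ALp s) →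
      u ≠ w → i + j + s ≤ 2 * D + 2 := by
  intro s
  induction s using Nat.strong_induction_on with
  | _ s IH =>
    intro u i w j hmem hne
    have hAL := CT_base hmem
    have hpW : ((u, i), (w, j)) ∈ WK W D := (mem_ALp.1 hAL).1
    have hSh := WK_Sh hpW
    have w5 : i ≤ j + 1 := hSh.1
    have w6 : j ≤ i + 1 := hSh.2.1
    have himg : (u, w) ∈ W := hpW.1.2
    rcases eq_or_ne i j with heq | hne2
    · -- horizontal
      subst heq
      have hiD : i < D := by
        by_contra hc
        exact hpW.2 ⟨rfl, show D ≤ i by omega, hne⟩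
      cases s with
      | zero => omega
      | succ s' =>
        obtain ⟨hb, hnb⟩ := mem_CT_succ.1 hmem
        obtain ⟨e, heu, hew, hW1, hW2⟩ := ALp_extract hb
        obtain ⟨-, hall, -⟩ := mem_NBad.1 hnb
        have l1 : ((u, i), (e, i + 1)) ∈ WK W D :=
          edge_mem_WK (Ne.symm heu) hW1 (by omega) (by omega) (by omega)
        have l2 : ((e, i + 1), (w, i)) ∈ WK W D :=
          edge_mem_WK hew hW2 (by omega) (by omega) (by omega)
        have hq := (hall (e, i + 1) l1 l2).2
        have := IH s' (by omega) e (i + 1) w i hq hew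
        omega
    · -- vertical
      have hvert : j = i + 1 ∨ i = j + 1 := by omega
      by_cases hdeep : D ≤ min i j
      · exact absurd hAL (K1 (by omega) (by omega) hne2)
      · by_cases hbd : max i j ≤ D - 1
        · -- interior climb
          cases s with
          | zero => omega
          | succ s' =>
            obtain ⟨hb, hnb⟩ := mem_CT_succ.1 hmem
            obtain ⟨e, heu, hew, hW1, hW2⟩ := ALp_extract hb
            obtain ⟨-, hall, -⟩ := mem_NBad.1 hnb
            rcases hvert with hv | hv
            · -- j = i + 1, climb right to horizontal at j
              have l1 : ((u, i), (e, j)) ∈ WK W D :=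
                edge_mem_WK (Ne.symm heu) hW1 (by omega) (by omega) (by omega)
              have l2 : ((e, j), (w, j)) ∈ WK W D :=
                edge_mem_WK hew hW2 (by omega) (by omega) (by omega)
              have hq := (hall (e, j) l1 l2).2
              have := IH s' (by omega) e j w j hq hew
              omega
            · -- i = j + 1, climb left to horizontal at i
              have l1 : ((u, i), (e, i)) ∈ WK W D :=
                edge_mem_WK (Ne.symm heu) hW1 (by omega) (by omega) (by omega)
              have l2 : ((e, i), (w, j)) ∈ WK W D :=
                edge_mem_WK hew hW2 (by omega) (by omega) (by omega)
              have hq := (hall (e, i) l1 l2).1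
              have := IH s' (by omega) u i e i hq (Ne.symm heu)
              omega
        · -- boundary : max i j = D, min = D - 1
          have hmax : max i j = D := by omega
          by_cases hsmall : s ≤ 3
          · omega
          · exfalso
            obtain ⟨s', rfl⟩ : ∃ s', s = s' + 1 := ⟨s - 1, by omega⟩
            obtain ⟨hb, hnb⟩ := mem_CT_succ.1 hmem
            obtain ⟨-, hall, -⟩ := mem_NBad.1 hnb
            rcases hvert with hv | hv
            · -- j = D : loop at p.2
              have hloop : (w, w) ∈ W := (hRW u w himg).2
              have l2 : ((w, j), (w, j)) ∈ WK W D := loop_mem_WK hloop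
              have hq := (hall (w, j) hpW l2).2
              exact loop_escape (by omega) (by omega) hq
            · -- i = D : loop at p.1
              have hloop : (u, u) ∈ W := (hRW u w himg).1
              have l1 : ((u, i), (u, i)) ∈ WK W D := loop_mem_WK hloop
              have hq := (hall (u, i) l1 hpW).1
              exact loop_escape (by omega) (by omega) hq

/-- The killer model has no `CT ALp r` pairs at all, for `r` large. -/
lemma killer_empty (hRW : ∀ a b : U, (a, b) ∈ W → (a, a) ∈ W ∧ (b, b) ∈ W)
    {r : ℕ} (hr : 2 * D + 3 ≤ r) :
    rint (WK W D) (vK W v D) (CT (ALp : RTerm m) r) = ∅ := by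
  ext p
  simp only [Set.mem_empty_iff_false, iff_false]
  intro hmem
  obtain ⟨⟨u, i⟩, w, j⟩ := p
  rcases eq_or_ne u w with rfl | hne
  · -- loop-type pair : points equal forces grades equal by shape
    have hpW : ((u, i), (u, j)) ∈ WK W D := (mem_ALp.1 (CT_base hmem)).1
    have hij : i = j := (WK_Sh hpW).2.2 rfl
    subst hij
    obtain ⟨r', rfl⟩ : ∃ r', r = r' + 1 := ⟨r - 1, by omega⟩
    obtain ⟨hb, hnb⟩ := mem_CT_succ.1 hmem
    obtain ⟨e, heu, -, hW1, hW2⟩ := ALp_extract hb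
    obtain ⟨-, hall, -⟩ := mem_NBad.1 hnb
    have l1 : ((u, i), (e, i + 1)) ∈ WK W D :=
      edge_mem_WK (Ne.symm heu) hW1 (by omega) (by omega) (by omega)
    have l2 : ((e, i + 1), (u, i)) ∈ WK W D :=
      edge_mem_WK heu hW2 (by omega) (by omega) (by omega)
    have hq := (hall (e, i + 1) l1 l2).1
    have := KL hRW r' u i e (i + 1) hq (Ne.symm heu)
    omega
  · have := KL hRW r u i w j hmem hne
    omega

end Killer1b

section Killer2
variable {U : Type} {W : Set (U × U)} {v : Fin m → Set (U × U)} {D : ℕ}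

/-- Deep loop pairs (removed in the killer model, case `R ∉ H`). -/
def Rem2 (D : ℕ) : Set ((U × ℕ) × (U × ℕ)) := {p | p.1 = p.2 ∧ D ≤ p.1.2}

def WK2 (W : Set (U × U)) (D : ℕ) : Set ((U × ℕ) × (U × ℕ)) := GW W \ Rem2 D

def vK2 (W : Set (U × U)) (v : Fin m → Set (U × U)) (D : ℕ) (i : Fin m) :
    Set ((U × ℕ) × (U × ℕ)) := Gv W v i ∩ WK2 W D

lemma vK2_sub (i : Fin m) : vK2 W v D i ⊆ WK2 W D := fun _ h => h.2

lemma WK2_Sh {p : (U × ℕ) × (U × ℕ)} (h : p ∈ WK2 W D) : Sh p := h.1.1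

/-- Distinct-point pairs over base edges are always in the second killer model. -/
lemma edge_mem_WK2 {u e : U} {i k : ℕ} (hne : u ≠ e) (hW : (u, e) ∈ W)
    (hik : i ≤ k + 1) (hki : k ≤ i + 1) : ((u, i), (e, k)) ∈ WK2 W D := by
  refine ⟨⟨⟨hik, hki, fun hc => absurd hc hne⟩, hW⟩, ?_⟩
  rintro ⟨heq, -⟩
  exact hne (congrArg Prod.fst heq)

lemma ALp_extract2 {u w : U} {i j : ℕ}
    (h : ((u, i), (w, j)) ∈ rint (WK2 W D) (vK2 W v D) ALp) :
    ∃ e, e ≠ u ∧ e ≠ w ∧ (u, e) ∈ W ∧ (e, w) ∈ W := by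
  obtain ⟨hp, ⟨e, k⟩, ⟨h1, hne1⟩, ⟨h2, hne2⟩⟩ := mem_ALp.1 h
  exact ⟨e, fun hc => ne_of_div (WK2_Sh h1) hne1 hc.symm,
    fun hc => ne_of_div (WK2_Sh h2) hne2 hc, h1.1.2, h2.1.2⟩

/-- The main killer bound, case `R ∉ H`. -/
lemma KL2 : ∀ s (u : U) i w j,
    ((u, i), (w, j)) ∈ rint (WK2 W D) (vK2 W v D) (CT (.mul RLt ALp) s) →
      2 * j + s ≤ 2 * D + 2 ∧ (j ≤ i → 2 * j + s + 1 ≤ 2 * D + 2) := by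
  intro s
  induction s using Nat.strong_induction_on with
  | _ s IH =>
    intro u i w j hmem
    have hb := CT_base hmem
    have hRL : ((u, i), (w, j)) ∈ rint (WK2 W D) (vK2 W v D) RLt := hb.1
    have hAL : ((u, i), (w, j)) ∈ rint (WK2 W D) (vK2 W v D) ALp := hb.2
    obtain ⟨hpW, hloop⟩ := mem_RLt.1 hRL
    have hjD : j < D := by
      by_contra hc
      exact hloop.2 ⟨rfl, show D ≤ j by omega⟩
    have hSh := WK2_Sh hpW
    have w5 : i ≤ j + 1 := hSh.1
    have w6 : j ≤ i + 1 := hSh.2.1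
    cases s with
    | zero => omega
    | succ s' =>
      obtain ⟨-, hnb⟩ := mem_CT_succ.1 hmem
      obtain ⟨e, heu, hew, hW1, hW2⟩ := ALp_extract2 hAL
      obtain ⟨-, hall, -⟩ := mem_NBad.1 hnb
      by_cases hji : j ≤ i
      · -- climb right coordinate
        have l1 : ((u, i), (e, j + 1)) ∈ WK2 W D :=
          edge_mem_WK2 (Ne.symm heu) hW1 (by omega) (by omega)
        have l2 : ((e, j + 1), (w, j)) ∈ WK2 W D :=
          edge_mem_WK2 hew hW2 (by omega) (by omega)
        have hq := (hall (e, j + 1) l1 l2).1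
        have := (IH s' (by omega) u i e (j + 1) hq).1
        omega
      · -- i = j - 1 : level the left coordinate first
        have l1 : ((u, i), (e, j)) ∈ WK2 W D :=
          edge_mem_WK2 (Ne.symm heu) hW1 (by omega) (by omega)
        have l2 : ((e, j), (w, j)) ∈ WK2 W D :=
          edge_mem_WK2 hew hW2 (by omega) (by omega)
        have hq := (hall (e, j) l1 l2).2
        have := (IH s' (by omega) e j w j hq).2 (le_refl j)
        omega

/-- The second killer model has no `CT (RLt·ALp) r` pairs, for `r` large. -/
lemma killer2_empty {r : ℕ} (hr : 2 * D + 3 ≤ r) :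
    rint (WK2 W D) (vK2 W v D) (CT (.mul RLt ALp : RTerm m) r) = ∅ := by
  ext p
  simp only [Set.mem_empty_iff_false, iff_false]
  intro hmem
  obtain ⟨⟨u, i⟩, w, j⟩ := p
  have := (KL2 r u i w j hmem).1
  omega

end Killer2

section Island
variable {U : Type} {W : Set (U × U)} {v : Fin m → Set (U × U)} {D : ℕ}

/-- The island model: the grid plus a full deep part. -/
def WIe (W : Set (U × U)) (D : ℕ) : Set ((U × ℕ) × (U × ℕ)) :=
  GW W ∪ {p | Sh p ∧ D ≤ min p.1.2 p.2.2}

def vI (W : Set (U × U)) (v : Fin m → Set (U × U)) (i : Fin m) :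
    Set ((U × ℕ) × (U × ℕ)) := Gv W v i

lemma vI_sub (i : Fin m) : vI W v i ⊆ WIe W D := fun p h => Or.inl h.1

lemma WIe_Sh {p : (U × ℕ) × (U × ℕ)} (h : p ∈ WIe W D) : Sh p := by
  rcases h with h | h
  · exact h.1
  · exact h.1

lemma deep_mem_WIe {p : (U × ℕ) × (U × ℕ)} (hs : Sh p) (hd : D ≤ min p.1.2 p.2.2) :
    p ∈ WIe W D := Or.inr ⟨hs, hd⟩

/-- Deep pairs satisfy the coreachability terms in the island model. -/
lemma ISL {b : RTerm m}
    (hb : ∀ p : (U × ℕ) × (U × ℕ), Sh p → D ≤ min p.1.2 p.2.2 →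
      p ∈ rint (WIe W D) (vI W v) b) :
    ∀ (s : ℕ) (p : (U × ℕ) × (U × ℕ)), Sh p → D + s ≤ min p.1.2 p.2.2 →
      p ∈ rint (WIe W D) (vI W v) (CT b s) := by
  intro s
  induction s with
  | zero => intro p hs hd; exact hb p hs (by omega)
  | succ s ih =>
    intro p hs hd
    refine mem_CT_succ.2 ⟨hb p hs (by omega), mem_NBad.2 ⟨deep_mem_WIe hs (by omega), ?_, ?_⟩⟩
    · intro c h1 h2
      obtain ⟨⟨u, i⟩, w, j⟩ := p
      obtain ⟨e, k⟩ := c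
      have hs1 := WIe_Sh h1
      have hs2 := WIe_Sh h2
      have e1 : i ≤ k + 1 := hs1.1
      have e2 : k ≤ i + 1 := hs1.2.1
      have e3 : k ≤ j + 1 := hs2.1
      have e4 : j ≤ k + 1 := hs2.2.1
      have hd' : D + (s + 1) ≤ min i j := hd
      constructor
      · exact ih ((u, i), (e, k)) hs1 (by show D + s ≤ min i k; omega)
      · exact ih ((e, k), (w, j)) hs2 (by show D + s ≤ min k j; omega)
    · intro hsw
      obtain ⟨⟨u, i⟩, w, j⟩ := p
      have hd' : D + (s + 1) ≤ min i j := hd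
      exact ih ((w, j), (u, i)) (Sh_swap hs) (by show D + s ≤ min j i; omega)

/-- Choice of a point distinct from two given points, among three distinct ones. -/
lemma third_exists {x y z : U} (hxy : x ≠ y) (hxz : x ≠ z) (hyz : y ≠ z) (u w : U) :
    ∃ e, e ≠ u ∧ e ≠ w ∧ (e = x ∨ e = y ∨ e = z) := by
  by_cases hx : x ≠ u ∧ x ≠ w
  · exact ⟨x, hx.1, hx.2, Or.inl rfl⟩
  by_cases hy : y ≠ u ∧ y ≠ w
  · exact ⟨y, hy.1, hy.2, Or.inr (Or.inl rfl)⟩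
  · have hx' : x = u ∨ x = w := by tauto
    have hy' : y = u ∨ y = w := by tauto
    refine ⟨z, ?_, ?_, Or.inr (Or.inr rfl)⟩
    · intro hzu
      rcases hx' with hxu | hxw
      · exact hxz (hxu.trans hzu.symm)
      · rcases hy' with hyu | hyw
        · exact hyz (hyu.trans hzu.symm)
        · exact hxy (hxw.trans hyw.symm)
    · intro hzw
      rcases hx' with hxu | hxw
      · rcases hy' with hyu | hyw
        · exact hxy (hxu.trans hyu.symm)
        · exact hyz (hyw.trans hzw.symm)
      · exact hxz (hxw.trans hzw.symm)

end Island

section IslandBase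
variable {U : Type} {W : Set (U × U)} {v : Fin m → Set (U × U)} {D : ℕ}

/-- Deep pairs are diversity-alive in the island model (given ≥ 3 points). -/
lemma hb_ALp {x y z : U} (hxy : x ≠ y) (hxz : x ≠ z) (hyz : y ≠ z) :
    ∀ p : (U × ℕ) × (U × ℕ), Sh p → D ≤ min p.1.2 p.2.2 →
      p ∈ rint (WIe W D) (vI W v) ALp := by
  rintro ⟨⟨u, i⟩, w, j⟩ hs hd
  obtain ⟨e, heu, hew, -⟩ := third_exists hxy hxz hyz u w
  have hd' : D ≤ min i j := hd
  have e1 : i ≤ j + 1 := hs.1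
  have e2 : j ≤ i + 1 := hs.2.1
  refine mem_ALp.2 ⟨deep_mem_WIe hs hd, (e, min i j + 1), ⟨?_, ?_⟩, ⟨?_, ?_⟩⟩
  · refine deep_mem_WIe ⟨?_, ?_, fun hc => absurd hc.symm heu⟩ ?_
    · show i ≤ min i j + 1 + 1; omega
    · show min i j + 1 ≤ i + 1; omega
    · show D ≤ min i (min i j + 1); omega
  · intro hc
    exact heu (congrArg Prod.fst hc).symm
  · refine deep_mem_WIe ⟨?_, ?_, fun hc => absurd hc hew⟩ ?_
    · show min i j + 1 ≤ j + 1; omega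
    · show j ≤ min i j + 1 + 1; omega
    · show D ≤ min (min i j + 1) j; omega
  · intro hc
    exact hew (congrArg Prod.fst hc)

/-- Deep pairs are right-looped and diversity-alive in the island model. -/
lemma hb_RL {x y z : U} (hxy : x ≠ y) (hxz : x ≠ z) (hyz : y ≠ z) :
    ∀ p : (U × ℕ) × (U × ℕ), Sh p → D ≤ min p.1.2 p.2.2 →
      p ∈ rint (WIe W D) (vI W v) (.mul RLt ALp) := by
  intro p hs hd
  refine ⟨mem_RLt.2 ⟨deep_mem_WIe hs hd, ?_⟩, hb_ALp hxy hxz hyz p hs hd⟩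
  refine deep_mem_WIe (Sh_loop _) ?_
  have h1 : D ≤ min p.1.2 p.2.2 := hd
  show D ≤ min p.2.2 p.2.2
  omega

end IslandBase

section Path
variable {U : Type} {W : Set (U × U)} {v : Fin m → Set (U × U)} {D : ℕ}

/-- The rotating triangle of points along the climbing path. -/
def tri (x y z : U) : ℕ → U × U × U
  | 0 => (x, y, z)
  | s + 1 =>
      let t := tri x y z s
      if s % 2 = 0 then (t.1, t.2.2, t.2.1) else (t.2.2, t.2.1, t.1)

/-- The components of `tri` stay a system of three distinct points of `{x,y,z}`. -/
def triOk (x y z : U) (t : U × U × U) : Prop :=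
  (t.1 = x ∨ t.1 = y ∨ t.1 = z) ∧ (t.2.1 = x ∨ t.2.1 = y ∨ t.2.1 = z) ∧
  (t.2.2 = x ∨ t.2.2 = y ∨ t.2.2 = z) ∧
  t.1 ≠ t.2.1 ∧ t.1 ≠ t.2.2 ∧ t.2.1 ≠ t.2.2

lemma tri_ok {x y z : U} (hxy : x ≠ y) (hxz : x ≠ z) (hyz : y ≠ z) :
    ∀ s, triOk x y z (tri x y z s) := by
  intro s
  induction s with
  | zero => exact ⟨Or.inl rfl, Or.inr (Or.inl rfl), Or.inr (Or.inr rfl),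
      hxy, hxz, hyz⟩
  | succ s ih =>
    obtain ⟨h1, h2, h3, h4, h5, h6⟩ := ih
    show triOk x y z (if s % 2 = 0 then _ else _)
    by_cases hpar : s % 2 = 0 <;> simp only [tri, hpar, if_true, if_false, reduceIte] <;>
      exact ⟨by tauto, by tauto, by tauto, by tauto, by tauto, by tauto⟩

/-- The climbing path of grid pairs. -/
def pr (x y z : U) (s : ℕ) : (U × ℕ) × (U × ℕ) :=
  (((tri x y z s).1, s / 2), ((tri x y z s).2.1, (s + 1) / 2))

end Path

section Path2
variable {U : Type} {W : Set (U × U)} {v : Fin m → Set (U × U)} {D : ℕ}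
variable {x y z : U}

lemma pr_mem_WIe (hok : ∀ s, triOk x y z (tri x y z s))
    (hE : ∀ p q : U, (p = x ∨ p = y ∨ p = z) → (q = x ∨ q = y ∨ q = z) → p ≠ q →
      (p, q) ∈ W) (s : ℕ) : pr x y z s ∈ WIe W D := by
  obtain ⟨h1, h2, h3, h4, h5, h6⟩ := hok s
  refine Or.inl ⟨⟨?_, ?_, fun hc => absurd hc h4⟩, hE _ _ h1 h2 h4⟩
  · show s / 2 ≤ (s + 1) / 2 + 1; omega
  · show (s + 1) / 2 ≤ s / 2 + 1; omega

lemma reach_down (hok : ∀ s, triOk x y z (tri x y z s))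
    (hE : ∀ p q : U, (p = x ∨ p = y ∨ p = z) → (q = x ∨ q = y ∨ q = z) → p ≠ q →
      (p, q) ∈ W) (V : RTerm m) :
    ∀ (j s : ℕ), pr x y z (s + j) ∈ rint (WIe W D) (vI W v) V →
      pr x y z s ∈ rint (WIe W D) (vI W v) (RT V j) := by
  intro j
  induction j with
  | zero => intro s h; exact h
  | succ j ih =>
    intro s h
    have hnext : pr x y z (s + 1) ∈ rint (WIe W D) (vI W v) (RT V j) :=
      ih (s + 1) (by rwa [show s + (j + 1) = s + 1 + j by omega] at h)
    have htri : tri x y z (s + 1) =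
        (if s % 2 = 0 then ((tri x y z s).1, (tri x y z s).2.2, (tri x y z s).2.1)
         else ((tri x y z s).2.2, (tri x y z s).2.1, (tri x y z s).1)) := rfl
    obtain ⟨h1, h2, h3, h4, h5, h6⟩ := hok s
    by_cases hpar : s % 2 = 0
    · -- m1 move
      have hc1 : (pr x y z (s + 1)).1 = (pr x y z s).1 := by
        simp only [pr, htri, if_pos hpar]
        have : (s + 1) / 2 = s / 2 := by omega
        rw [this]
      have heq : ((pr x y z s).1, (pr x y z (s + 1)).2) = pr x y z (s + 1) := by
        rw [← hc1]
      have hleg2 : ((pr x y z (s + 1)).2, (pr x y z s).2) ∈ WIe W D := by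
        simp only [pr, htri, if_pos hpar]
        refine Or.inl ⟨⟨?_, ?_, fun hc => absurd hc (Ne.symm h6)⟩, hE _ _ h3 h2 (Ne.symm h6)⟩
        · show (s + 1 + 1) / 2 ≤ (s + 1) / 2 + 1; omega
        · show (s + 1) / 2 ≤ (s + 1 + 1) / 2 + 1; omega
      refine RT_step_m1 (pr_mem_WIe hok hE s) ?_ hleg2
      rw [heq]
      exact hnext
    · -- m2 move
      have hc2 : (pr x y z (s + 1)).2 = (pr x y z s).2 := by
        simp only [pr, htri, if_neg hpar]
        have : (s + 1 + 1) / 2 = (s + 1) / 2 := by omega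
        rw [this]
      have heq : ((pr x y z (s + 1)).1, (pr x y z s).2) = pr x y z (s + 1) := by
        rw [← hc2]
      have hleg1 : ((pr x y z s).1, (pr x y z (s + 1)).1) ∈ WIe W D := by
        simp only [pr, htri, if_neg hpar]
        refine Or.inl ⟨⟨?_, ?_, fun hc => absurd hc h5⟩, hE _ _ h1 h3 h5⟩
        · show s / 2 ≤ (s + 1) / 2 + 1; omega
        · show (s + 1) / 2 ≤ s / 2 + 1; omega
      refine RT_step_m2 (pr_mem_WIe hok hE s) hleg1 ?_
      rw [heq]
      exact hnext

end Path2

section Support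
variable {U : Type} {W : Set (U × U)} {v : Fin m → Set (U × U)} {D : ℕ} {H : Set RS}

lemma termT_elim {x y : U} (h : (x, y) ∈ rint W v (termT : RTerm m)) :
    x ≠ y ∧ (x, y) ∈ W ∧ (y, x) ∈ W ∧
      ∃ z, z ≠ x ∧ z ≠ y ∧ (x, z) ∈ W ∧ (z, x) ∈ W ∧ (z, y) ∈ W ∧ (y, z) ∈ W := by
  obtain ⟨⟨hd, hcv⟩, -, c, hc1, hc2⟩ := h
  have hd' := mem_div.1 hd
  have hcv' := mem_div.1 hcv.2
  have h1 := mem_div.1 hc1.1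
  have h1' := mem_div.1 hc1.2.2
  have h2 := mem_div.1 hc2.1
  have h2' := mem_div.1 hc2.2.2
  exact ⟨hd'.2, hd'.1, hcv'.1, c, fun hc => h1.2 hc.symm, h2.2, h1.1, h1'.1, h2.1, h2'.1⟩

lemma isHRel_WIe (hH : IsHRel H W) : IsHRel H (WIe W D) := by
  constructor
  · intro hR p q hpq
    rcases hpq with hpq | hpq
    · have hl := hH.1 hR _ _ hpq.2
      exact ⟨Or.inl ⟨Sh_loop _, hl.1⟩, Or.inl ⟨Sh_loop _, hl.2⟩⟩
    · constructor
      · refine deep_mem_WIe (Sh_loop _) ?_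
        have h1 : D ≤ min p.2 q.2 := hpq.2
        show D ≤ min p.2 p.2
        simp only [min_self]
        simp only [le_min_iff] at h1
        omega
      · refine deep_mem_WIe (Sh_loop _) ?_
        have h1 : D ≤ min p.2 q.2 := hpq.2
        show D ≤ min q.2 q.2
        simp only [min_self]
        simp only [le_min_iff] at h1
        omega
  · intro hS p q hpq
    rcases hpq with hpq | hpq
    · exact Or.inl ⟨Sh_swap hpq.1, hH.2 hS _ _ hpq.2⟩
    · refine deep_mem_WIe (Sh_swap hpq.1) ?_
      have h1 : D ≤ min p.2 q.2 := hpq.2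
      show D ≤ min q.2 p.2
      omega

lemma isHRel_WK (hH : IsHRel H W) : IsHRel H (WK W D) := by
  constructor
  · intro hR p q hpq
    have hl := hH.1 hR _ _ hpq.1.2
    exact ⟨loop_mem_WK hl.1, loop_mem_WK hl.2⟩
  · intro hS p q hpq
    refine ⟨⟨Sh_swap hpq.1.1, hH.2 hS _ _ hpq.1.2⟩, ?_⟩
    rintro ⟨he1, he2, he3⟩
    have he1' : q.2 = p.2 := he1
    have he2' : D ≤ q.2 := he2
    exact hpq.2 ⟨he1'.symm, show D ≤ p.2 by omega, Ne.symm he3⟩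

lemma isHRel_WK2 (hH : IsHRel H W) (hR : RS.R ∉ H) : IsHRel H (WK2 W D) := by
  constructor
  · intro hR'; exact absurd hR' hR
  · intro hS p q hpq
    refine ⟨⟨Sh_swap hpq.1.1, hH.2 hS _ _ hpq.1.2⟩, ?_⟩
    rintro ⟨he1, he2⟩
    refine hpq.2 ⟨he1.symm, ?_⟩
    have h3 : q.2 = p.2 := congrArg Prod.snd he1
    have he2' : D ≤ q.2 := he2
    show D ≤ p.2
    omega

lemma agreeW_WIe : ∀ p : (U × ℕ) × (U × ℕ), max p.1.2 p.2.2 < D →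
    (p ∈ WIe W D ↔ p ∈ GW W) := by
  intro p hd
  constructor
  · rintro (h | h)
    · exact h
    · exfalso
      have h1 : D ≤ min p.1.2 p.2.2 := h.2
      omega
  · exact Or.inl

lemma agreeW_WK : ∀ p : (U × ℕ) × (U × ℕ), max p.1.2 p.2.2 < D →
    (p ∈ WK W D ↔ p ∈ GW W) := by
  intro p hd
  constructor
  · exact fun h => h.1
  · intro h
    refine ⟨h, ?_⟩
    rintro ⟨-, h2, -⟩
    omega

lemma agreeW_WK2 : ∀ p : (U × ℕ) × (U × ℕ), max p.1.2 p.2.2 < D →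
    (p ∈ WK2 W D ↔ p ∈ GW W) := by
  intro p hd
  constructor
  · exact fun h => h.1
  · intro h
    refine ⟨h, ?_⟩
    rintro ⟨-, h2⟩
    omega

lemma agreev_WK : ∀ (i : Fin m) (p : (U × ℕ) × (U × ℕ)), max p.1.2 p.2.2 < D →
    (p ∈ vK W v D i ↔ p ∈ Gv W v i) := by
  intro i p hd
  constructor
  · exact fun h => h.1
  · intro h
    exact ⟨h, (agreeW_WK p hd).2 h.1⟩

lemma agreev_WK2 : ∀ (i : Fin m) (p : (U × ℕ) × (U × ℕ)), max p.1.2 p.2.2 < D →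
    (p ∈ vK2 W v D i ↔ p ∈ Gv W v i) := by
  intro i p hd
  constructor
  · exact fun h => h.1
  · intro h
    exact ⟨h, (agreeW_WK2 p hd).2 h.1⟩

end Support

section Final
variable {H : Set RS}

/-- `termT` is not zero. -/
lemma termT_nonzero (m : ℕ) (H : Set RS) : ¬ Valid H (termT : RTerm m) .zero := by
  intro hval
  have h3 : IsHRel H (Set.univ : Set (Fin 3 × Fin 3)) :=
    ⟨fun _ _ _ _ => ⟨trivial, trivial⟩, fun _ _ _ _ => trivial⟩
  have heq := hval (Fin 3) Set.univ (fun _ => ∅) h3 (fun _ => Set.empty_subset _)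
  have hmem : ((0 : Fin 3), (1 : Fin 3)) ∈
      rint (Set.univ : Set (Fin 3 × Fin 3)) (fun _ => ∅) (termT : RTerm m) := by
    refine ⟨⟨mem_div.2 ⟨trivial, by decide⟩, trivial, mem_div.2 ⟨trivial, by decide⟩⟩,
      trivial, (2 : Fin 3),
      ⟨mem_div.2 ⟨trivial, by decide⟩, trivial, mem_div.2 ⟨trivial, by decide⟩⟩,
      ⟨mem_div.2 ⟨trivial, by decide⟩, trivial, mem_div.2 ⟨trivial, by decide⟩⟩⟩
  rw [heq] at hmem
  exact hmem

/-- Main: no atom lies below `termT`. -/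
theorem no_atom_below_termT (m : ℕ) (H : Set RS) (σ : RTerm m)
    (hatom : IsAtomT H σ) : ¬ Valid H (σ.mul termT) σ := by
  classical
  intro hle
  obtain ⟨hnz, hdec⟩ := hatom
  unfold Valid at hnz
  push_neg at hnz
  obtain ⟨U, W, v, hH, hv, hne⟩ := hnz
  rw [rint_zero] at hne
  obtain ⟨⟨x, y⟩, hxy⟩ := Set.nonempty_iff_ne_empty.2 hne
  have hT : (x, y) ∈ rint W v (termT : RTerm m) := by
    have h2 := hle U W v hH hv
    rw [rint_mul] at h2
    have hxy2 := hxy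
    rw [← h2] at hxy2
    exact hxy2.2
  obtain ⟨hxyne, eW1, eW2, z, hzx, hzy, eW3, eW4, eW5, eW6⟩ := termT_elim hT
  -- triangle data
  have hxz : x ≠ z := Ne.symm hzx
  have hyz : y ≠ z := Ne.symm hzy
  have hE : ∀ p q : U, (p = x ∨ p = y ∨ p = z) → (q = x ∨ q = y ∨ q = z) → p ≠ q →
      (p, q) ∈ W := by
    rintro p q (rfl | rfl | rfl) (rfl | rfl | rfl) hne' <;>
      first
        | exact absurd rfl hne'
        | assumption
  have hok := tri_ok hxyne hxz hyz (z := z)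
  -- numeric data
  set n := cd σ with hn
  set Dd := n + 2 with hD
  set r := 2 * Dd + 6 with hr
  set G := Dd + r with hG
  -- root facts
  have hSh0 : Sh ((x, 0), (y, 0)) := ⟨Nat.zero_le _, Nat.zero_le _, fun _ => rfl⟩
  have hroot0 : ((x, (0 : ℕ)), (y, (0 : ℕ))) ∈ rint (GW W) (Gv W v) σ :=
    (L1 hv σ _ hSh0).2 hxy
  have hrootGW : ((x, (0 : ℕ)), (y, (0 : ℕ))) ∈ GW W := ⟨hSh0, eW1⟩
  -- island model: σ at root
  have hrootI : ((x, (0 : ℕ)), (y, (0 : ℕ))) ∈ rint (WIe W Dd) (vI W v) σ := by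
    refine (Cagree Dd (WIe W Dd) (vI W v) (fun p hp => WIe_Sh hp) vI_sub
      agreeW_WIe (fun i p _ => Iff.rfl) σ _ ?_).2 hroot0
    show max 0 0 + cd σ < Dd
    omega
  by_cases hR : RS.R ∈ H
  · -- case R ∈ H
    set V := CT (ALp : RTerm m) r with hV
    set ρ := RT V (2 * G) with hρ
    have hRW : ∀ a b : U, (a, b) ∈ W → (a, a) ∈ W ∧ (b, b) ∈ W := hH.1 hR
    rcases hdec ρ with hval1 | hval2
    · -- contradict σ·ρ = 0 in the island model
      have heq := hval1 (U × ℕ) (WIe W Dd) (vI W v) (isHRel_WIe hH) vI_sub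
      rw [rint_mul, rint_zero] at heq
      have hisl : pr x y z (2 * G) ∈ rint (WIe W Dd) (vI W v) V := by
        refine ISL (hb_ALp hxyne hxz hyz) r _ (WIe_Sh (D := Dd) (pr_mem_WIe (D := Dd) hok hE (2 * G))) ?_
        show Dd + r ≤ min ((2 * G) / 2) ((2 * G + 1) / 2)
        omega
      have hρmem : pr x y z 0 ∈ rint (WIe W Dd) (vI W v) ρ := by
        refine reach_down hok hE V (2 * G) 0 ?_
        rw [show 0 + 2 * G = 2 * G by omega]
        exact hisl
      have : ((x, (0 : ℕ)), (y, (0 : ℕ))) ∈ (∅ : Set ((U × ℕ) × (U × ℕ))) := by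
        rw [← heq]
        exact ⟨hrootI, hρmem⟩
      exact this
    · -- contradict σ·(¬ρ) = 0 in the killer model
      have heq := hval2 (U × ℕ) (WK W Dd) (vK W v Dd) (isHRel_WK hH) vK_sub
      rw [rint_mul, rint_zero] at heq
      have hrootK : ((x, (0 : ℕ)), (y, (0 : ℕ))) ∈ rint (WK W Dd) (vK W v Dd) σ := by
        refine (Cagree Dd (WK W Dd) (vK W v Dd) (fun p hp => WK_Sh hp) vK_sub
          agreeW_WK agreev_WK σ _ ?_).2 hroot0
        show max 0 0 + cd σ < Dd
        omega
      have hρempty : rint (WK W Dd) (vK W v Dd) ρ = ∅ :=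
        RT_empty (killer_empty hRW (by omega)) (2 * G)
      have hrootWK : ((x, (0 : ℕ)), (y, (0 : ℕ))) ∈ WK W Dd := by
        refine ⟨hrootGW, ?_⟩
        rintro ⟨-, h2, -⟩
        have h3 : Dd ≤ 0 := h2
        omega
      have : ((x, (0 : ℕ)), (y, (0 : ℕ))) ∈ (∅ : Set ((U × ℕ) × (U × ℕ))) := by
        rw [← heq]
        refine ⟨hrootK, hrootWK, ?_⟩
        rw [hρempty]
        exact Set.notMem_empty _
      exact this
  · -- case R ∉ H
    set V := CT (.mul RLt ALp : RTerm m) r with hV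
    set ρ := RT V (2 * G) with hρ
    rcases hdec ρ with hval1 | hval2
    · have heq := hval1 (U × ℕ) (WIe W Dd) (vI W v) (isHRel_WIe hH) vI_sub
      rw [rint_mul, rint_zero] at heq
      have hisl : pr x y z (2 * G) ∈ rint (WIe W Dd) (vI W v) V := by
        refine ISL (hb_RL hxyne hxz hyz) r _ (WIe_Sh (D := Dd) (pr_mem_WIe (D := Dd) hok hE (2 * G))) ?_
        show Dd + r ≤ min ((2 * G) / 2) ((2 * G + 1) / 2)
        omega
      have hρmem : pr x y z 0 ∈ rint (WIe W Dd) (vI W v) ρ := by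
        refine reach_down hok hE V (2 * G) 0 ?_
        rw [show 0 + 2 * G = 2 * G by omega]
        exact hisl
      have : ((x, (0 : ℕ)), (y, (0 : ℕ))) ∈ (∅ : Set ((U × ℕ) × (U × ℕ))) := by
        rw [← heq]
        exact ⟨hrootI, hρmem⟩
      exact this
    · have heq := hval2 (U × ℕ) (WK2 W Dd) (vK2 W v Dd) (isHRel_WK2 hH hR) vK2_sub
      rw [rint_mul, rint_zero] at heq
      have hrootK : ((x, (0 : ℕ)), (y, (0 : ℕ))) ∈ rint (WK2 W Dd) (vK2 W v Dd) σ := by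
        refine (Cagree Dd (WK2 W Dd) (vK2 W v Dd) (fun p hp => WK2_Sh hp) vK2_sub
          agreeW_WK2 agreev_WK2 σ _ ?_).2 hroot0
        show max 0 0 + cd σ < Dd
        omega
      have hρempty : rint (WK2 W Dd) (vK2 W v Dd) ρ = ∅ :=
        RT_empty (killer2_empty (by omega)) (2 * G)
      have hrootWK : ((x, (0 : ℕ)), (y, (0 : ℕ))) ∈ WK2 W Dd := by
        refine ⟨hrootGW, ?_⟩
        rintro ⟨h1, h2⟩
        have h3 : Dd ≤ 0 := h2
        omega
      have : ((x, (0 : ℕ)), (y, (0 : ℕ))) ∈ (∅ : Set ((U × ℕ) × (U × ℕ))) := by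
        rw [← heq]
        refine ⟨hrootK, hrootWK, ?_⟩
        rw [hρempty]
        exact Set.notMem_empty _
      exact this

end Final

end S13

/-- if `m ≠ 0` or `H ≠ {R,S}`, then `Fr_m(RRA_H)` is not atomic:
some nonzero `[τ]` has no atom below it. -/
theorem stmt_13 (m : ℕ) (H : Set RS) (h : m ≠ 0 ∨ H ≠ {RS.R, RS.S}) :
    ∃ τ : RTerm m, ¬ Valid H τ .zero ∧
      ∀ σ : RTerm m, IsAtomT H σ → ¬ Valid H (σ.mul τ) σ := by
  exact ⟨termT, S13.termT_nonzero m H, fun σ hatom => S13.no_atom_below_termT m H σ hatom⟩
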